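/- For all α, β ∈ [0,1], the facility location profile (w_1, w_2) output by the (α,β)-Quantile mechanism always coincides with the pair of representatives of some single group: there exists a group d such that w_1 = y_{d(1)} and w_2 = y_{d(2)}, i.e., w_1 and w_2 are respectively the closest candidate location to x_{α_d} and the closest candidate location to x_{α_d} in A with one copy of w_1 removed. -/

import Mathlib

noncomputable section

/-- Max-variant individual cost of an agent at `x` under facility profile `w`. -/
def fcost (x : ℝ) (w : ℝ × ℝ) : ℝ := max |x - w.1| |x - w.2|

/-- `w` is a facility location profile for the candidate multiset `A`:
its first slot is an element of `A` and its second slot is an element of `A`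
with one copy of the first slot removed. -/
def IsProfile (A : Multiset ℝ) (w : ℝ × ℝ) : Prop :=
  w.1 ∈ A ∧ w.2 ∈ A.erase w.1

/-- Canonical closest element of the multiset `A` to `p` (ties broken to the smaller). -/
def closest (A : Multiset ℝ) (p : ℝ) : ℝ :=
  if h : A.toFinset.Nonempty then
    (A.toFinset.filter fun a => ∀ b ∈ A.toFinset, |p - a| ≤ |p - b|).min'
      (by
        obtain ⟨a, ha, hmin⟩ := A.toFinset.exists_min_image (fun a => |p - a|) h
        exact ⟨a, Finset.mem_filter.mpr ⟨ha, hmin⟩⟩)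
  else 0

/-- The `⌈γ · |S|⌉`-th leftmost element of the multiset `S` (the leftmost when `γ = 0`). -/
def qSel (S : Multiset ℝ) (γ : ℝ) : ℝ :=
  (S.sort (· ≤ ·)).getD (⌈γ * (Multiset.card S : ℝ)⌉.toNat - 1) 0

/-- Multiset of locations of the agents of group `d`. -/
def groupLocs {n k : ℕ} (group : Fin n → Fin k) (x : Fin n → ℝ) (d : Fin k) : Multiset ℝ :=
  ((Finset.univ.filter fun i => group i = d).val).map x

/-- The (α,β)-Quantile mechanism: for each group `d` the representatives are the two
candidate locations closest to the ⌈α·n_d⌉-th leftmost agent of the group, and the two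
facilities are chosen among the representatives by the ⌈β·k⌉-th leftmost rule. -/
def quantileMech (A : Multiset ℝ) (α β : ℝ) {n k : ℕ}
    (group : Fin n → Fin k) (x : Fin n → ℝ) : ℝ × ℝ :=
  let y1 : Fin k → ℝ := fun d => closest A (qSel (groupLocs group x d) α)
  let y2 : Fin k → ℝ := fun d => closest (A.erase (y1 d)) (qSel (groupLocs group x d) α)
  let w1 : ℝ := qSel (Finset.univ.val.map y1) β
  let w2 : ℝ := qSel (Finset.univ.val.map fun d => if y1 d = w1 then y2 d else y1 d) β
  (w1, w2)

lemma closest_spec (A : Multiset ℝ) (hA : A ≠ 0) (p : ℝ) :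
    closest A p ∈ A ∧ ∀ b ∈ A, |p - closest A p| ≤ |p - b| := by
  have h : A.toFinset.Nonempty := by
    obtain ⟨a, ha⟩ := Multiset.exists_mem_of_ne_zero hA
    exact ⟨a, Multiset.mem_toFinset.mpr ha⟩
  rw [closest, dif_pos h]
  have hm := Finset.min'_mem (A.toFinset.filter fun a => ∀ b ∈ A.toFinset, |p - a| ≤ |p - b|)
    (by
      obtain ⟨a, ha, hmin⟩ := A.toFinset.exists_min_image (fun a => |p - a|) h
      exact ⟨a, Finset.mem_filter.mpr ⟨ha, hmin⟩⟩)
  rw [Finset.mem_filter] at hm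
  exact ⟨Multiset.mem_toFinset.mp hm.1, fun b hb => hm.2 b (Multiset.mem_toFinset.mpr hb)⟩

lemma qSel_index_lt {S : Multiset ℝ} (hS : S ≠ 0) {γ : ℝ} (hγ : γ ≤ 1) :
    ⌈γ * (Multiset.card S : ℝ)⌉.toNat - 1 < Multiset.card S := by
  have hcard : 0 < Multiset.card S := Multiset.card_pos.mpr hS
  have h1 : ⌈γ * (Multiset.card S : ℝ)⌉ ≤ (Multiset.card S : ℤ) := by
    rw [Int.ceil_le]; push_cast
    exact mul_le_of_le_one_left (by positivity) hγ
  have h2 : ⌈γ * (Multiset.card S : ℝ)⌉.toNat ≤ Multiset.card S := by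
    omega
  omega

lemma qSel_mem {S : Multiset ℝ} (hS : S ≠ 0) {γ : ℝ} (hγ : γ ≤ 1) : qSel S γ ∈ S := by
  have hidx : ⌈γ * (Multiset.card S : ℝ)⌉.toNat - 1 < (S.sort (· ≤ ·)).length := by
    rw [Multiset.length_sort]; exact qSel_index_lt hS hγ
  rw [qSel, List.getD_eq_get _ _ ⟨_, hidx⟩]
  have := List.get_mem (S.sort (· ≤ ·)) ⟨_, hidx⟩
  rwa [Multiset.mem_sort] at this

lemma sorted_countP_lt (S : Multiset ℝ) (i : ℕ) (hi : i < Multiset.card S) :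
    Multiset.countP (fun z => z < (S.sort (· ≤ ·)).getD i 0) S ≤ i := by
  have hlen : i < (S.sort (· ≤ ·)).length := by rwa [Multiset.length_sort]
  set l := S.sort (· ≤ ·) with hl
  rw [List.getD_eq_get _ _ ⟨_, hlen⟩]
  have hS : Multiset.countP (fun z => z < l.get ⟨i, hlen⟩) S
      = l.countP (fun z => decide (z < l.get ⟨i, hlen⟩)) := by
    conv_lhs => rw [← Multiset.sort_eq S (· ≤ ·), ← hl]
    exact Multiset.coe_countP _ l
  rw [hS]
  have hsplit : l.countP (fun z => decide (z < l.get ⟨i, hlen⟩))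
      = (l.take i).countP (fun z => decide (z < l.get ⟨i, hlen⟩))
        + (l.drop i).countP (fun z => decide (z < l.get ⟨i, hlen⟩)) := by
    rw [← List.countP_append, List.take_append_drop]
  have hdrop : (l.drop i).countP (fun z => decide (z < l.get ⟨i, hlen⟩)) = 0 := by
    rw [List.countP_eq_zero]
    intro a ha
    obtain ⟨⟨j, hj⟩, hja⟩ := List.mem_iff_get.mp ha
    have hij : i + j < l.length := by
      have : (l.drop i).length = l.length - i := List.length_drop; omega
    have : (l.drop i).get ⟨j, hj⟩ = l.get ⟨i + j, hij⟩ := by simp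
    have hle : l.get ⟨i, hlen⟩ ≤ l.get ⟨i + j, hij⟩ :=
      (Multiset.pairwise_sort S (· ≤ ·)).rel_get_of_le (by simp)
    rw [← hja, this]
    simpa using not_lt.mpr hle
  calc _ = (l.take i).countP _ := by rw [hsplit, hdrop, Nat.add_zero]
    _ ≤ (l.take i).length := List.countP_le_length
    _ ≤ i := by rw [List.length_take]; omega

lemma sorted_countP_le (S : Multiset ℝ) (i : ℕ) (hi : i < Multiset.card S) :
    i + 1 ≤ Multiset.countP (fun z => z ≤ (S.sort (· ≤ ·)).getD i 0) S := by
  have hlen : i < (S.sort (· ≤ ·)).length := by rwa [Multiset.length_sort]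
  set l := S.sort (· ≤ ·) with hl
  rw [List.getD_eq_get _ _ ⟨_, hlen⟩]
  have hS : Multiset.countP (fun z => z ≤ l.get ⟨i, hlen⟩) S
      = l.countP (fun z => decide (z ≤ l.get ⟨i, hlen⟩)) := by
    conv_lhs => rw [← Multiset.sort_eq S (· ≤ ·), ← hl]
    exact Multiset.coe_countP _ l
  rw [hS]
  have hsplit : l.countP (fun z => decide (z ≤ l.get ⟨i, hlen⟩))
      = (l.take (i+1)).countP (fun z => decide (z ≤ l.get ⟨i, hlen⟩))
        + (l.drop (i+1)).countP (fun z => decide (z ≤ l.get ⟨i, hlen⟩)) := by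
    rw [← List.countP_append, List.take_append_drop]
  have htake : (l.take (i+1)).countP (fun z => decide (z ≤ l.get ⟨i, hlen⟩))
      = (l.take (i+1)).length := by
    rw [List.countP_eq_length]
    intro a ha
    obtain ⟨⟨j, hj⟩, hja⟩ := List.mem_iff_get.mp ha
    have hjl : j < l.length := by
      have : (l.take (i+1)).length = min (i+1) l.length := List.length_take
      have : j < min (i+1) l.length := by omega
      omega
    have hget : (l.take (i+1)).get ⟨j, hj⟩ = l.get ⟨j, hjl⟩ := by
      simp
    have hji : j ≤ i := by
      have : (l.take (i+1)).length = min (i+1) l.length := List.length_take; omega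
    have hle : l.get ⟨j, hjl⟩ ≤ l.get ⟨i, hlen⟩ :=
      (Multiset.pairwise_sort S (· ≤ ·)).rel_get_of_le (by simpa using hji)
    rw [← hja, hget]
    simpa using hle
  have hlt : (l.take (i+1)).length = i + 1 := by
    rw [List.length_take]; omega
  calc i + 1 = (l.take (i+1)).countP _ := by rw [htake, hlt]
    _ ≤ _ := by rw [hsplit]; omega
lemma closest_erase_eq (A : Multiset ℝ) (q w v : ℝ) (hw : w ∈ A) (hv : v ∈ A) (hvw : v ≠ w)
    (hcl : ∀ b ∈ A, |q - w| ≤ |q - b|)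
    (hside : (closest (A.erase w) q ≤ v ∧ v < w) ∨ (w < v ∧ v ≤ closest (A.erase w) q)) :
    closest (A.erase w) q = v := by
  have hvE : v ∈ A.erase w := (Multiset.mem_erase_of_ne hvw).mpr hv
  have hE0 : A.erase w ≠ 0 := fun h => by simp [h] at hvE
  obtain ⟨hymem, hymin⟩ := closest_spec (A.erase w) hE0 q
  set y := closest (A.erase w) q with hy
  have h2 : |q - y| ≤ |q - v| := hymin v hvE
  have h1 : |q - w| ≤ |q - v| := hcl v hv
  rcases hside with ⟨hyv, hvw'⟩ | ⟨hwv, hvy⟩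
  · refine le_antisymm hyv ?_
    by_contra hlt
    push_neg at hlt
    have hqv : v < q := by
      by_contra h
      push_neg at h
      have ev : |q - v| = v - q := by rw [abs_sub_comm]; exact abs_of_nonneg (by linarith)
      have ew : |q - w| = w - q := by rw [abs_sub_comm]; exact abs_of_nonneg (by linarith)
      rw [ev, ew] at h1; linarith
    have hv1 : |q - v| = q - v := abs_of_nonneg (by linarith)
    have hy1 : |q - y| = q - y := abs_of_nonneg (by linarith)
    rw [hv1, hy1] at h2; linarith
  · refine le_antisymm ?_ hvy
    by_contra hlt
    push_neg at hlt
    have hqv : q < v := by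
      by_contra h
      push_neg at h
      have ev : |q - v| = q - v := abs_of_nonneg (by linarith)
      have ew : |q - w| = q - w := abs_of_nonneg (by linarith)
      rw [ev, ew] at h1; linarith
    have hv1 : |q - v| = v - q := by rw [abs_sub_comm]; exact abs_of_nonneg (by linarith)
    have hy1 : |q - y| = y - q := by rw [abs_sub_comm]; exact abs_of_nonneg (by linarith)
    rw [hv1, hy1] at h2; linarith
/-- Core combinatorial lemma: abstract version of the theorem with `q d` the quantile
location of group `d`. -/
lemma quantile_core
    (β : ℝ) (hβ0 : 0 ≤ β) (hβ1 : β ≤ 1)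
    (A : Multiset ℝ) (hA : 2 ≤ Multiset.card A)
    (k : ℕ) (hk : 0 < k) (q : Fin k → ℝ) :
    ∃ e : Fin k,
      qSel (Finset.univ.val.map fun d => closest A (q d)) β = closest A (q e) ∧
      qSel (Finset.univ.val.map fun d =>
          if closest A (q d) = qSel (Finset.univ.val.map fun d' => closest A (q d')) β
          then closest (A.erase (closest A (q d))) (q d) else closest A (q d)) β
        = closest (A.erase (qSel (Finset.univ.val.map fun d' => closest A (q d')) β)) (q e) := by
  classical
  have hA0 : A ≠ 0 := by
    intro h; rw [h] at hA; simp at hA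
  set y1 : Fin k → ℝ := fun d => closest A (q d) with hy1
  set y2 : Fin k → ℝ := fun d => closest (A.erase (y1 d)) (q d) with hy2
  set Z : Multiset ℝ := Finset.univ.val.map y1 with hZ
  set w1 : ℝ := qSel Z β with hw1
  set z' : Fin k → ℝ := fun d => if y1 d = w1 then y2 d else y1 d with hz'
  set Z' : Multiset ℝ := Finset.univ.val.map z' with hZ'
  set w2 : ℝ := qSel Z' β with hw2
  -- the goal should now be phrased in terms of w1, w2
  show ∃ e, w1 = y1 e ∧ w2 = closest (A.erase w1) (q e)
  have hcZ : Multiset.card Z = k := by simp [hZ]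
  have hcZ' : Multiset.card Z' = k := by simp [hZ']
  have hZ0 : Z ≠ 0 := by
    intro h; rw [h] at hcZ; simp at hcZ; omega
  have hZ'0 : Z' ≠ 0 := by
    intro h; rw [h] at hcZ'; simp at hcZ'; omega
  set m : ℕ := ⌈β * (k : ℝ)⌉.toNat - 1 with hm_def
  have hm : m < k := by
    have := qSel_index_lt hZ0 hβ1
    rwa [hcZ] at this
  have hw1def : w1 = (Z.sort (· ≤ ·)).getD m 0 := by rw [hw1, qSel, hcZ]
  have hw2def : w2 = (Z'.sort (· ≤ ·)).getD m 0 := by rw [hw2, qSel, hcZ']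
  -- membership facts
  obtain ⟨d0, _, hd0⟩ := Multiset.mem_map.mp (by rw [hZ] at *; exact qSel_mem hZ0 hβ1 : w1 ∈ Z)
  obtain ⟨dd, _, hdd⟩ := Multiset.mem_map.mp (by rw [hZ'] at *; exact qSel_mem hZ'0 hβ1 : w2 ∈ Z')
  have hw1A : w1 ∈ A := by rw [← hd0]; exact (closest_spec A hA0 (q d0)).1
  by_cases hcase : ∃ e, y1 e = w1 ∧ y2 e = w2
  · obtain ⟨e, he1, he2⟩ := hcase
    refine ⟨e, he1.symm, ?_⟩
    rw [← he2]
    simp only [hy2]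
    rw [he1]
  · push_neg at hcase
    -- w2 comes from an unreplaced group, so w2 = y1 dd with y1 dd ≠ w1
    have hne : y1 dd ≠ w1 := by
      intro h
      apply hcase dd h
      rw [← hdd]
      simp only [hz', if_pos h]
    have hw2y : w2 = y1 dd := by
      rw [← hdd]
      simp only [hz', if_neg hne]
    have hw2A : w2 ∈ A := by rw [hw2y]; exact (closest_spec A hA0 (q dd)).1
    have hw2ne : w2 ≠ w1 := by rw [hw2y]; exact hne
    -- counting lemmas
    have c1 : m + 1 ≤ Multiset.countP (fun z => z ≤ w1) Z := by
      have := sorted_countP_le Z m (by rw [hcZ]; exact hm)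
      rwa [← hw1def] at this
    have c2 : Multiset.countP (fun z => z < w1) Z ≤ m := by
      have := sorted_countP_lt Z m (by rw [hcZ]; exact hm)
      rwa [← hw1def] at this
    have c3 : m + 1 ≤ Multiset.countP (fun z => z ≤ w2) Z' := by
      have := sorted_countP_le Z' m (by rw [hcZ']; exact hm)
      rwa [← hw2def] at this
    have c4 : Multiset.countP (fun z => z < w2) Z' ≤ m := by
      have := sorted_countP_lt Z' m (by rw [hcZ']; exact hm)
      rwa [← hw2def] at this
    rcases lt_trichotomy w2 w1 with hlt | heq | hgt
    · -- w2 < w1 : some replaced group has y2 e ≤ w2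
      have hex : ∃ e, y1 e = w1 ∧ y2 e ≤ w2 := by
        by_contra hno
        push_neg at hno
        have key : Multiset.countP (fun z => z ≤ w2) Z'
            ≤ Multiset.countP (fun z => z ≤ w2) Z := by
          rw [hZ', hZ, Multiset.countP_map, Multiset.countP_map]
          apply Multiset.card_le_card
          apply Multiset.monotone_filter_right
          intro d hd
          by_cases hyd : y1 d = w1
          · exfalso
            have h1 := hno d hyd
            rw [hz'] at hd
            simp only [if_pos hyd] at hd
            linarith
          · rw [hz'] at hd
            simpa only [if_neg hyd] using hd
        have key2 : Multiset.countP (fun z => z ≤ w2) Z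
            ≤ Multiset.countP (fun z => z < w1) Z := by
          rw [hZ, Multiset.countP_map, Multiset.countP_map]
          apply Multiset.card_le_card
          apply Multiset.monotone_filter_right
          intro d hd
          exact lt_of_le_of_lt hd hlt
        omega
      obtain ⟨e, he1, he2⟩ := hex
      have hcl : ∀ b ∈ A, |q e - w1| ≤ |q e - b| := by
        have := (closest_spec A hA0 (q e)).2
        rwa [show closest A (q e) = w1 from he1] at this
      have he2' : closest (A.erase w1) (q e) ≤ w2 := by
        rw [← he1]; simpa only [hy2] using he2
      have := closest_erase_eq A (q e) w1 w2 hw1A hw2A hw2ne hcl (Or.inl ⟨he2', hlt⟩)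
      exact ⟨e, he1.symm, this.symm⟩
    · exact absurd heq hw2ne
    · -- w1 < w2 : some replaced group has w2 ≤ y2 e
      have hex : ∃ e, y1 e = w1 ∧ w2 ≤ y2 e := by
        by_contra hno
        push_neg at hno
        have key : Multiset.countP (fun z => w2 ≤ z) Z'
            ≤ Multiset.countP (fun z => w2 ≤ z) Z := by
          rw [hZ', hZ, Multiset.countP_map, Multiset.countP_map]
          apply Multiset.card_le_card
          apply Multiset.monotone_filter_right
          intro d hd
          by_cases hyd : y1 d = w1
          · exfalso
            have h1 := hno d hyd
            rw [hz'] at hd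
            simp only [if_pos hyd] at hd
            linarith
          · rw [hz'] at hd
            simpa only [if_neg hyd] using hd
        have e1 : Multiset.countP (fun z => w2 ≤ z) Z'
            = k - Multiset.countP (fun z => z < w2) Z' := by
          have hsum := Multiset.card_eq_countP_add_countP (fun z => z < w2) Z'
          have : Multiset.countP (fun z => ¬ z < w2) Z'
              = Multiset.countP (fun z => w2 ≤ z) Z' :=
            Multiset.countP_congr rfl (fun z _ => by simp [not_lt])
          omega
        have e2 : Multiset.countP (fun z => w2 ≤ z) Z
            ≤ k - (m + 1) := by
          have mono : Multiset.countP (fun z => w2 ≤ z) Z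
              ≤ Multiset.countP (fun z => ¬ z ≤ w1) Z := by
            rw [hZ, Multiset.countP_map, Multiset.countP_map]
            apply Multiset.card_le_card
            apply Multiset.monotone_filter_right
            intro d hd
            exact not_le.mpr (lt_of_lt_of_le hgt hd)
          have hsum := Multiset.card_eq_countP_add_countP (fun z => z ≤ w1) Z
          omega
        omega
      obtain ⟨e, he1, he2⟩ := hex
      have hcl : ∀ b ∈ A, |q e - w1| ≤ |q e - b| := by
        have := (closest_spec A hA0 (q e)).2
        rwa [show closest A (q e) = w1 from he1] at this
      have he2' : w2 ≤ closest (A.erase w1) (q e) := by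
        rw [← he1]; simpa only [hy2] using he2
      have := closest_erase_eq A (q e) w1 w2 hw1A hw2A hw2ne hcl (Or.inr ⟨hgt, he2'⟩)
      exact ⟨e, he1.symm, this.symm⟩
/-- The output of the (α,β)-Quantile mechanism always coincides with the pair of
representatives of some single group: the two facilities are respectively the closest
candidate location to the group's quantile agent, and the closest candidate location
to that agent in `A` with one copy of the first facility removed. -/
theorem quantileMech_output_is_group_representatives
    (α β : ℝ) (hα : α ∈ Set.Icc (0 : ℝ) 1) (hβ : β ∈ Set.Icc (0 : ℝ) 1)
    (A : Multiset ℝ) (hA : 2 ≤ Multiset.card A)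
    (n k : ℕ) (hn : 0 < n) (hk : 0 < k)
    (group : Fin n → Fin k) (hgrp : ∀ d : Fin k, ∃ i : Fin n, group i = d)
    (x : Fin n → ℝ) :
    ∃ d : Fin k,
      (quantileMech A α β group x).1 = closest A (qSel (groupLocs group x d) α) ∧
      (quantileMech A α β group x).2 =
        closest (A.erase ((quantileMech A α β group x).1)) (qSel (groupLocs group x d) α) := by
  obtain ⟨e, h1, h2⟩ :=
    quantile_core β hβ.1 hβ.2 A hA k hk (fun d => qSel (groupLocs group x d) α)
  exact ⟨e, h1, h2⟩

end
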